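/- Let G be a graph and e = ⟨v,w⟩ an edge of G such that there is no graph homomorphism L_3 → G ∖ e sending 0 to v and 3 to w. Then for any (σ, τ) ∈ B(G) with neither v nor w in σ, the fiber r_{e*}^{-1}(σ, τ) equals {(σ, τ)}. -/

import Mathlib

/-- A graph: a symmetric relation on a vertex type (loops allowed). -/
structure Graph' (V : Type*) where
  adj : V → V → Prop
  symm : ∀ {x y : V}, adj x y → adj y x

variable {V : Type*}

/-- `f` is a graph homomorphism from `G` to `H`. -/
def IsGraphHom {W : Type*} (G : Graph' V) (H : Graph' W) (f : V → W) : Prop :=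
  ∀ {x y : V}, G.adj x y → H.adj (f x) (f y)

/-- The path graph `L₃` on vertices `0,1,2,3`. -/
def L3 : Graph' (Fin 4) where
  adj i j := (i : ℕ) + 1 = j ∨ (j : ℕ) + 1 = i
  symm h := h.symm

/-- The graph `G ∖ e` obtained from `G` by deleting the edge `e = ⟨v,w⟩`. -/
def delEdge (G : Graph' V) (v w : V) : Graph' V where
  adj x y := G.adj x y ∧ ¬ ((x = v ∧ y = w) ∨ (x = w ∧ y = v))
  symm h := ⟨G.symm h.1, fun hc => h.2 (by tauto)⟩

/-- The subdivision `G_e` of `G` at `e = ⟨v,w⟩`: delete `e`, add new vertices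
`0 = Sum.inr false` and `1 = Sum.inr true` with edges `⟨0,1⟩, ⟨0,v⟩, ⟨1,w⟩`. -/
def subdiv (G : Graph' V) (v w : V) : Graph' (V ⊕ Bool) where
  adj a b :=
    match a, b with
    | .inl x, .inl y => G.adj x y ∧ ¬ ((x = v ∧ y = w) ∨ (x = w ∧ y = v))
    | .inl x, .inr c => (c = false ∧ x = v) ∨ (c = true ∧ x = w)
    | .inr c, .inl x => (c = false ∧ x = v) ∨ (c = true ∧ x = w)
    | .inr c, .inr d => c ≠ d
  symm := by
    rintro (x | c) (y | d) h
    · exact ⟨G.symm h.1, fun hc => h.2 (by tauto)⟩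
    · exact h
    · exact h
    · exact h.symm

/-- The natural map `r_e : G_e → G`: identity on `V(G)`, `0 ↦ w`, `1 ↦ v`. -/
def retr (v w : V) : V ⊕ Bool → V :=
  Sum.elim id (fun c => if c then v else w)

/-- `p = (σ,τ)` is an element of the box complex `B(H) = Hom(K₂,H)`. -/
def IsBoxPair {W : Type*} (H : Graph' W) (p : Set W × Set W) : Prop :=
  p.1.Nonempty ∧ p.2.Nonempty ∧ ∀ a ∈ p.1, ∀ b ∈ p.2, H.adj a b

/-- If there is no homomorphism `L₃ → G ∖ e` with `0 ↦ v`, `3 ↦ w`, then for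
any `(σ,τ) ∈ B(G)` with `v ∉ σ` and `w ∉ σ`, the fiber `r_{e∗}^{-1}(σ,τ)`
equals the singleton `{(σ,τ)}` (where `(σ,τ)` is regarded inside `B(G_e)`
via `Sum.inl`). -/
theorem stmt_6 (G : Graph' V) (v w : V) (he : G.adj v w) (hne : v ≠ w)
    (hL : ¬ ∃ f : Fin 4 → V, IsGraphHom L3 (delEdge G v w) f ∧ f 0 = v ∧ f 3 = w)
    (σ τ : Set V) (hbox : IsBoxPair G (σ, τ)) (hv : v ∉ σ) (hw : w ∉ σ) :
    IsBoxPair (subdiv G v w) (Sum.inl '' σ, Sum.inl '' τ) ∧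
    ∀ p : Set (V ⊕ Bool) × Set (V ⊕ Bool),
      IsBoxPair (subdiv G v w) p →
      (retr v w '' p.1 = σ ∧ retr v w '' p.2 = τ ↔
        p = (Sum.inl '' σ, Sum.inl '' τ)) := by
  obtain ⟨⟨a0, ha0⟩, ⟨b0, hb0⟩, hadj⟩ := hbox
  constructor
  · refine ⟨⟨_, Set.mem_image_of_mem _ ha0⟩, ⟨_, Set.mem_image_of_mem _ hb0⟩, ?_⟩
    rintro _ ⟨a, ha, rfl⟩ _ ⟨b, hb, rfl⟩
    refine ⟨hadj a ha b hb, ?_⟩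
    rintro (⟨rfl, rfl⟩ | ⟨rfl, rfl⟩)
    · exact hv ha
    · exact hw ha
  · rintro ⟨p1, p2⟩ ⟨⟨x0, hx0⟩, ⟨y0, hy0⟩, hp⟩
    constructor
    · rintro ⟨h1, h2⟩
      -- every element of p1 is `inl a` with `a ∈ σ`
      have hno1 : ∀ x ∈ p1, ∃ a, a ∈ σ ∧ x = Sum.inl a := by
        rintro (a | c) hx
        · exact ⟨a, by rw [← h1]; exact ⟨Sum.inl a, hx, rfl⟩, rfl⟩
        · exfalso
          have : retr v w (Sum.inr c) ∈ σ := by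
            rw [← h1]; exact ⟨Sum.inr c, hx, rfl⟩
          cases c
          · exact hw (by simpa [retr] using this)
          · exact hv (by simpa [retr] using this)
      -- every element of p2 is `inl b` with `b ∈ τ`
      have hno2 : ∀ y ∈ p2, ∃ b, b ∈ τ ∧ y = Sum.inl b := by
        rintro (b | c) hy
        · exact ⟨b, by rw [← h2]; exact ⟨Sum.inl b, hy, rfl⟩, rfl⟩
        · exfalso
          obtain ⟨a, haσ, rfl⟩ := hno1 x0 hx0
          have := hp _ hx0 _ hy
          rcases this with ⟨_, rfl⟩ | ⟨_, rfl⟩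
          · exact hv haσ
          · exact hw haσ
      have e1 : p1 = Sum.inl '' σ := by
        ext x
        constructor
        · intro hx
          obtain ⟨a, haσ, rfl⟩ := hno1 x hx
          exact ⟨a, haσ, rfl⟩
        · rintro ⟨a, haσ, rfl⟩
          rw [← h1] at haσ
          obtain ⟨y, hy, hya⟩ := haσ
          obtain ⟨b, _, rfl⟩ := hno1 y hy
          have : b = a := hya
          subst this; exact hy
      have e2 : p2 = Sum.inl '' τ := by
        ext y
        constructor
        · intro hy
          obtain ⟨b, hbτ, rfl⟩ := hno2 y hy
          exact ⟨b, hbτ, rfl⟩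
        · rintro ⟨b, hbτ, rfl⟩
          rw [← h2] at hbτ
          obtain ⟨y', hy', hyb⟩ := hbτ
          obtain ⟨c, _, rfl⟩ := hno2 y' hy'
          have : c = b := hyb
          subst this; exact hy'
      simp [e1, e2]
    · rintro h
      rw [Prod.mk.injEq] at h
      obtain ⟨rfl, rfl⟩ := h
      constructor
      · ext a; constructor
        · rintro ⟨_, ⟨b, hb, rfl⟩, rfl⟩; exact hb
        · intro ha; exact ⟨Sum.inl a, ⟨a, ha, rfl⟩, rfl⟩
      · ext b; constructor
        · rintro ⟨_, ⟨c, hc, rfl⟩, rfl⟩; exact hc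
        · intro hb; exact ⟨Sum.inl b, ⟨b, hb, rfl⟩, rfl⟩
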